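/- arXiv:1612.05103 — 2 statements merged into one kernel-verified Lean document; each statement's English description precedes it below -/
import Mathlib

section
/- (Energy dissipation for Caputo gradient flows.) Let 0 < γ < 1, T ∈ (0, ∞], let E : ℝ^m → ℝ be convex and continuously differentiable, and let v : [0, T) → ℝ^m be continuously differentiable and satisfy, for all t ∈ (0, T), the Caputo gradient-flow equation (1/Γ(1−γ)) ∫_0^t (t−s)^{−γ} v′(s) ds = −∇E(v(t)). Then E(v(t)) ≤ E(v(0)) for all t ∈ [0, T). -/
open MeasureTheory Set
open scoped ENNReal

open InnerProductSpace Topology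

lemma caputo_subgrad {m : ℕ} {E : EuclideanSpace ℝ (Fin m) → ℝ}
    (hconv : ConvexOn ℝ Set.univ E)
    {y G : EuclideanSpace ℝ (Fin m)} (hg : HasGradientAt E G y)
    (x : EuclideanSpace ℝ (Fin m)) :
    ⟪G, x - y⟫_ℝ ≤ E x - E y := by
  set φ : ℝ → ℝ := fun τ => E (y + τ • (x - y)) with hφ
  have hc : ∀ τ : ℝ, HasDerivAt (fun τ : ℝ => y + τ • (x - y)) (x - y) τ := by
    intro τ
    simpa using ((hasDerivAt_id τ).smul_const (x - y)).const_add y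
  have hg' : HasFDerivAt E (toDual ℝ _ G) (y + (0:ℝ) • (x - y)) := by
    simpa using hg.hasFDerivAt
  have hd : HasDerivAt φ ⟪G, x - y⟫_ℝ 0 := by
    have := hg'.comp_hasDerivAt 0 (hc 0)
    simpa [hφ, toDual_apply_apply, Function.comp_def] using this
  have hslope : Filter.Tendsto (slope φ 0) (𝓝[>] 0) (𝓝 ⟪G, x - y⟫_ℝ) := by
    have := hasDerivAt_iff_tendsto_slope.1 hd
    exact this.mono_left (nhdsWithin_mono _ (fun τ hτ => ne_of_gt hτ))
  refine le_of_tendsto hslope ?_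
  filter_upwards [Ioo_mem_nhdsGT_of_mem (by norm_num : (0:ℝ) ∈ Ico (0:ℝ) 1)] with τ hτ
  obtain ⟨hτ0, hτ1⟩ := hτ
  have hconv' := hconv.2 (mem_univ x) (mem_univ y) (le_of_lt hτ0) (by linarith : (0:ℝ) ≤ 1 - τ)
    (by ring)
  have h1 : φ τ ≤ τ * E x + (1 - τ) * E y := by
    have h2 : y + τ • (x - y) = τ • x + (1 - τ) • y := by module
    rw [hφ]; simp only [h2]
    simpa [smul_eq_mul] using hconv'
  have hφ0 : φ 0 = E y := by simp [hφ]
  rw [slope_def_field, hφ0]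
  rw [div_le_iff₀ (by linarith : (0:ℝ) < τ - 0)]
  nlinarith [h1]

/-- Energy dissipation for Caputo gradient flows: for `0 < γ < 1`, `T ∈ (0,∞]`,
`E : ℝ^m → ℝ` convex and continuously differentiable (with gradient `g`), and
`v : [0,T) → ℝ^m` continuously differentiable satisfying the Caputo gradient-flow
equation `(1/Γ(1−γ)) ∫_0^t (t−s)^{−γ} v'(s) ds = −∇E(v(t))` for all `t ∈ (0,T)`,
one has `E(v(t)) ≤ E(v(0))` for all `t ∈ [0,T)`. -/
theorem caputo_gradient_flow_energy_dissipation
    (γ : ℝ) (hγ0 : 0 < γ) (hγ1 : γ < 1) (T : ℝ≥0∞) (hT : 0 < T) (m : ℕ)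
    (E : EuclideanSpace ℝ (Fin m) → ℝ)
    (g : EuclideanSpace ℝ (Fin m) → EuclideanSpace ℝ (Fin m))
    (hconv : ConvexOn ℝ Set.univ E)
    (hgrad : ∀ x : EuclideanSpace ℝ (Fin m), HasGradientAt E (g x) x)
    (hgcont : Continuous g)
    (v v' : ℝ → EuclideanSpace ℝ (Fin m))
    (hderiv : ∀ t : ℝ, 0 ≤ t → ENNReal.ofReal t < T → HasDerivAt v (v' t) t)
    (hv'cont : ContinuousOn v' {t : ℝ | 0 ≤ t ∧ ENNReal.ofReal t < T})
    (heq : ∀ t : ℝ, 0 < t → ENNReal.ofReal t < T →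
      (1 / Real.Gamma (1 - γ)) • (∫ s in (0:ℝ)..t, (t - s) ^ (-γ) • v' s) =
        -g (v t)) :
    ∀ t : ℝ, 0 ≤ t → ENNReal.ofReal t < T → E (v t) ≤ E (v 0) := by
  intro t ht0 htT
  by_contra hcon
  push_neg at hcon
  have ht0' : 0 < t := by
    rcases eq_or_lt_of_le ht0 with h | h
    · exact absurd hcon (by rw [← h]; exact lt_irrefl _)
    · exact h
  -- continuity of v and of f = E ∘ v on [0, t]
  have hmemT : ∀ s : ℝ, s ∈ Icc 0 t → (0 ≤ s ∧ ENNReal.ofReal s < T) := by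
    intro s hs
    exact ⟨hs.1, lt_of_le_of_lt (ENNReal.ofReal_le_ofReal hs.2) htT⟩
  have hvcont : ContinuousOn v (Icc 0 t) := by
    intro s hs
    exact ((hderiv s (hmemT s hs).1 (hmemT s hs).2).continuousAt).continuousWithinAt
  have hEcont : Continuous E := by
    rw [continuous_iff_continuousAt]
    exact fun x => (hgrad x).hasFDerivAt.differentiableAt.continuousAt
  set f : ℝ → ℝ := fun s => E (v s) with hf
  have hfcont : ContinuousOn f (Icc 0 t) := hEcont.comp_continuousOn hvcont
  -- maximum point
  obtain ⟨p, hpmem, hpmax⟩ := isCompact_Icc.exists_isMaxOn (nonempty_Icc.2 ht0) hfcont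
  have hpmax' : ∀ s ∈ Icc 0 t, f s ≤ f p := fun s hs => hpmax hs
  have hδ : 0 < f p - f 0 := by
    have := hpmax' t (right_mem_Icc.2 ht0)
    have : f t ≤ f p := this
    simp only [hf] at this ⊢
    linarith
  set δ : ℝ := f p - f 0 with hδdef
  have hp0 : 0 < p := by
    rcases eq_or_lt_of_le hpmem.1 with h | h
    · exfalso
      rw [hδdef, ← h] at hδ
      simp at hδ
    · exact h
  have hpT : ENNReal.ofReal p < T := (hmemT p hpmem).2
  have hpt : p ≤ t := hpmem.2
  -- key objects
  set G : EuclideanSpace ℝ (Fin m) := g (v p) with hG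
  set w' : ℝ → ℝ := fun s => ⟪G, v' s⟫_ℝ with hw'
  set w : ℝ → ℝ := fun s => ⟪G, v s⟫_ℝ with hw
  set φ : ℝ → ℝ := fun s => (p - s) ^ (-γ) * w' s with hφdef
  -- bound on ‖v'‖ on [0, p]
  have hv'contp : ContinuousOn v' (Icc 0 p) :=
    hv'cont.mono (fun s hs => hmemT s ⟨hs.1, le_trans hs.2 hpt⟩)
  obtain ⟨M0, hM0⟩ := isCompact_Icc.exists_bound_of_continuousOn hv'contp
  set M : ℝ := max M0 0 with hM
  have hMnonneg : 0 ≤ M := le_max_right _ _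
  have hMbound : ∀ s ∈ Icc 0 p, ‖v' s‖ ≤ M := fun s hs => (hM0 s hs).trans (le_max_left _ _)
  -- basic positivity
  have hΓpos : 0 < Real.Gamma (1 - γ) := Real.Gamma_pos_of_pos (by linarith)
  -- interval integrability of the kernel on 0..p
  have hker : IntervalIntegrable (fun s => (p - s) ^ (-γ)) volume 0 p := by
    have h1 : IntervalIntegrable (fun x : ℝ => x ^ (-γ)) volume 0 p :=
      intervalIntegral.intervalIntegrable_rpow' (by linarith)
    have := h1.comp_sub_left p
    simpa using this.symm
  -- integrability of the vector integrand
  have hkermeas : Measurable (fun s : ℝ => (p - s) ^ (-γ)) :=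
    (measurable_const.sub measurable_id).pow_const _
  have hv'meas : AEStronglyMeasurable v' (volume.restrict (uIoc (0:ℝ) p)) := by
    rw [uIoc_of_le hp0.le]
    exact (hv'contp.mono Ioc_subset_Icc_self).aestronglyMeasurable measurableSet_Ioc
  have hkerbound : ∀ s ∈ uIoc (0:ℝ) p, (0:ℝ) ≤ (p - s) ^ (-γ) ∧ (p - s) ^ (-γ) = |(p - s) ^ (-γ)| := by
    intro s hs
    rw [uIoc_of_le hp0.le] at hs
    have : (0:ℝ) ≤ (p - s) ^ (-γ) := Real.rpow_nonneg (by linarith [hs.2]) _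
    exact ⟨this, (abs_of_nonneg this).symm⟩
  have hvec : IntervalIntegrable (fun s => (p - s) ^ (-γ) • v' s) volume 0 p := by
    apply (hker.const_mul M).mono_fun
    · exact ((hkermeas.aestronglyMeasurable.restrict).smul hv'meas)
    · rw [Filter.EventuallyLE, ae_restrict_iff' measurableSet_uIoc]
      refine Filter.Eventually.of_forall fun s hs => ?_
      obtain ⟨hk0, _⟩ := hkerbound s hs
      have hsmem : s ∈ Icc 0 p := by
        rw [uIoc_of_le hp0.le] at hs; exact ⟨hs.1.le, hs.2⟩
      calc ‖(p - s) ^ (-γ) • v' s‖ = (p - s) ^ (-γ) * ‖v' s‖ := by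
            rw [norm_smul, Real.norm_eq_abs, abs_of_nonneg hk0]
        _ ≤ (p - s) ^ (-γ) * M := by
            exact mul_le_mul_of_nonneg_left (hMbound s hsmem) hk0
        _ ≤ ‖M * (p - s) ^ (-γ)‖ := by
            rw [Real.norm_eq_abs]; rw [mul_comm]; exact le_abs_self _
  -- scalar integrand integrability
  have hφint : IntervalIntegrable φ volume 0 p := by
    apply (hker.const_mul (‖G‖ * M)).mono_fun
    · apply AEStronglyMeasurable.mul (hkermeas.aestronglyMeasurable.restrict)
      have : ContinuousOn w' (Icc 0 p) := by
        apply ContinuousOn.inner continuousOn_const hv'contp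
      rw [uIoc_of_le hp0.le]
      exact (this.mono Ioc_subset_Icc_self).aestronglyMeasurable measurableSet_Ioc
    · rw [Filter.EventuallyLE, ae_restrict_iff' measurableSet_uIoc]
      refine Filter.Eventually.of_forall fun s hs => ?_
      obtain ⟨hk0, _⟩ := hkerbound s hs
      have hsmem : s ∈ Icc 0 p := by
        rw [uIoc_of_le hp0.le] at hs; exact ⟨hs.1.le, hs.2⟩
      have h1 : |w' s| ≤ ‖G‖ * M := by
        calc |w' s| ≤ ‖G‖ * ‖v' s‖ := abs_real_inner_le_norm _ _
          _ ≤ ‖G‖ * M := mul_le_mul_of_nonneg_left (hMbound s hsmem) (norm_nonneg _)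
      calc ‖φ s‖ = (p - s) ^ (-γ) * |w' s| := by
            rw [hφdef, Real.norm_eq_abs, abs_mul, abs_of_nonneg hk0]
        _ ≤ (p - s) ^ (-γ) * (‖G‖ * M) := mul_le_mul_of_nonneg_left h1 hk0
        _ ≤ ‖‖G‖ * M * (p - s) ^ (-γ)‖ := by
            rw [Real.norm_eq_abs, mul_comm]; exact le_abs_self _
  -- I ≤ 0
  set I : ℝ := ∫ s in (0:ℝ)..p, φ s with hIdef
  have hIeq : I = ⟪G, ∫ s in (0:ℝ)..p, (p - s) ^ (-γ) • v' s⟫_ℝ := by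
    have h0 := (innerSL ℝ G).intervalIntegral_comp_comm hvec
    simp only [innerSL_apply_apply] at h0
    rw [hIdef, ← h0]
    apply intervalIntegral.integral_congr
    intro s _
    simp only [hφdef, hw', real_inner_smul_right]
  have hIle : I ≤ 0 := by
    have h1 := heq p hp0 hpT
    have h2 : ⟪G, (1 / Real.Gamma (1 - γ)) • (∫ s in (0:ℝ)..p, (p - s) ^ (-γ) • v' s)⟫_ℝ =
        ⟪G, -G⟫_ℝ := by rw [h1]
    rw [real_inner_smul_right, inner_neg_right, real_inner_self_eq_norm_sq] at h2
    rw [← hIeq] at h2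
    have : (1 / Real.Gamma (1 - γ)) * I ≤ 0 := by
      rw [h2]; exact neg_nonpos.2 (by positivity)
    nlinarith [one_div_pos.2 hΓpos]
  -- derivative facts for w
  have hwderiv : ∀ s ∈ Icc 0 p, HasDerivAt w (w' s) s := by
    intro s hs
    have := (innerSL ℝ G).hasFDerivAt.comp_hasDerivAt s
      (hderiv s (hmemT s ⟨hs.1, hs.2.trans hpt⟩).1 (hmemT s ⟨hs.1, hs.2.trans hpt⟩).2)
    simpa [hw, hw', Function.comp_def] using this
  -- subgradient facts: w s - w p ≤ f s - f p
  have hsub : ∀ s : ℝ, w s - w p ≤ f s - f p := by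
    intro s
    have := caputo_subgrad hconv (hgrad (v p)) (v s)
    simpa [hw, hG, hf, inner_sub_right] using this
  have hwle : ∀ s ∈ Icc 0 p, w s ≤ w p := by
    intro s hs
    have h1 := hsub s
    have h2 : f s ≤ f p := hpmax' s ⟨hs.1, hs.2.trans hpt⟩
    linarith
  have hw0 : w 0 ≤ w p - δ := by
    have h1 := hsub 0
    rw [hδdef]; linarith
  -- MVT bound on v
  have hvlip : ∀ s ∈ Icc 0 p, ‖v p - v s‖ ≤ M * ‖p - s‖ := by
    intro s hs
    refine Convex.norm_image_sub_le_of_norm_hasDerivWithin_le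
      (f := v) (f' := v') (s := Icc 0 p) ?_ hMbound (convex_Icc 0 p) hs (right_mem_Icc.2 hp0.le)
    intro x hx
    exact ((hderiv x (hmemT x ⟨hx.1, hx.2.trans hpt⟩).1
      (hmemT x ⟨hx.1, hx.2.trans hpt⟩).2)).hasDerivWithinAt
  -- THE KEY ESTIMATE, for each ε ∈ (0, p)
  have hkey : ∀ ε : ℝ, 0 < ε → ε < p →
      p ^ (-γ) * δ ≤ (‖G‖ * M + ‖G‖ * M / (1 - γ)) * ε ^ (1 - γ) := by
    intro ε hε0 hεp
    set a : ℝ := p - ε with ha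
    have ha0 : 0 ≤ a := by simp [ha]; linarith
    have hap : a < p := by simp [ha]; linarith
    -- kernel derivative on [0, a]
    set u : ℝ → ℝ := fun s => (p - s) ^ (-γ) with hu
    set u' : ℝ → ℝ := fun s => γ * (p - s) ^ (-γ - 1) with hu'd
    have huderiv : ∀ s ∈ uIcc (0:ℝ) a, HasDerivAt u (u' s) s := by
      intro s hs
      rw [uIcc_of_le ha0] at hs
      have hps : 0 < p - s := by
        have := hs.2; simp only [ha] at this; linarith
      have h1 : HasDerivAt (fun s : ℝ => p - s) (-1) s := by
        simpa using (hasDerivAt_id s).const_sub p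
      have h2 := h1.rpow_const (p := -γ) (Or.inl (ne_of_gt hps))
      convert h2 using 1
      ring
    have hu'cont : ContinuousOn u' (uIcc (0:ℝ) a) := by
      rw [uIcc_of_le ha0]
      apply ContinuousOn.mul continuousOn_const
      apply ContinuousOn.rpow_const
      · exact (continuous_const.sub continuous_id).continuousOn
      · intro x hx
        left
        have := hx.2; simp only [ha] at this
        intro hc; rw [sub_eq_zero] at hc; linarith [hc]
    have hu'int : IntervalIntegrable u' volume 0 a := hu'cont.intervalIntegrable
    have hw'cont : ContinuousOn w' (Icc 0 p) :=
      ContinuousOn.inner continuousOn_const hv'contp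
    have hw'int : IntervalIntegrable w' volume 0 a := by
      apply ContinuousOn.intervalIntegrable
      rw [uIcc_of_le ha0]
      exact hw'cont.mono (Icc_subset_Icc le_rfl hap.le)
    have hwIcc : ∀ s ∈ uIcc (0:ℝ) a, HasDerivAt w (w' s) s := by
      intro s hs
      rw [uIcc_of_le ha0] at hs
      exact hwderiv s ⟨hs.1, hs.2.trans hap.le⟩
    -- integration by parts on [0, a]
    have hibp : ∫ s in (0:ℝ)..a, u s * w' s =
        u a * w a - u 0 * w 0 - ∫ s in (0:ℝ)..a, u' s * w s :=
      intervalIntegral.integral_mul_deriv_eq_deriv_mul huderiv hwIcc hu'int hw'int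
    -- FTC for ∫ u'
    have hftc : ∫ s in (0:ℝ)..a, u' s = u a - u 0 :=
      intervalIntegral.integral_eq_sub_of_hasDerivAt huderiv hu'int
    -- u' ≥ 0 on Icc 0 a
    have hu'nonneg : ∀ s ∈ Icc (0:ℝ) a, 0 ≤ u' s := by
      intro s hs
      have hps : 0 ≤ p - s := by have := hs.2; simp only [ha] at this; linarith
      exact mul_nonneg hγ0.le (Real.rpow_nonneg hps _)
    -- monotone bound for ∫ u' w
    have hwcont : ContinuousOn w (Icc 0 p) :=
      ContinuousOn.inner continuousOn_const (hvcont.mono (Icc_subset_Icc le_rfl hpt))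
    have hu'w_int : IntervalIntegrable (fun s => u' s * w s) volume 0 a := by
      apply ContinuousOn.intervalIntegrable
      rw [uIcc_of_le ha0]
      exact (hu'cont.mono (by rw [uIcc_of_le ha0])).mul
        (hwcont.mono (Icc_subset_Icc le_rfl hap.le))
    have hu'wp_int : IntervalIntegrable (fun s => u' s * w p) volume 0 a := by
      apply ContinuousOn.intervalIntegrable
      exact (hu'cont.mul continuousOn_const)
    have hmono : (∫ s in (0:ℝ)..a, u' s * w s) ≤ ∫ s in (0:ℝ)..a, u' s * w p := by
      apply intervalIntegral.integral_mono_on ha0 hu'w_int hu'wp_int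
      intro s hs
      exact mul_le_mul_of_nonneg_left (hwle s ⟨hs.1, hs.2.trans hap.le⟩) (hu'nonneg s hs)
    have hrhs : (∫ s in (0:ℝ)..a, u' s * w p) = (u a - u 0) * w p := by
      rw [intervalIntegral.integral_mul_const, hftc]
    -- values of u
    have hua : u a = ε ^ (-γ) := by rw [hu]; simp [ha]
    have hu0 : u 0 = p ^ (-γ) := by rw [hu]; simp
    -- bound |w a - w p|
    have hwap : |w a - w p| ≤ ‖G‖ * (M * ε) := by
      have h1 : w a - w p = ⟪G, v a - v p⟫_ℝ := by rw [hw]; simp [inner_sub_right]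
      rw [h1]
      calc |⟪G, v a - v p⟫_ℝ| ≤ ‖G‖ * ‖v a - v p‖ := abs_real_inner_le_norm _ _
        _ ≤ ‖G‖ * (M * ε) := by
            apply mul_le_mul_of_nonneg_left _ (norm_nonneg _)
            have h2 := hvlip a ⟨ha0, hap.le⟩
            rw [← norm_neg (v a - v p)]
            simp only [neg_sub]
            calc ‖v p - v a‖ ≤ M * ‖p - a‖ := h2
              _ = M * ε := by rw [ha]; congr 1; rw [Real.norm_eq_abs]; rw [abs_of_pos]; ring;
                              linarith
    -- lower bound for ∫_0^a φ
    have hεγ : ε ^ (-γ) * ε = ε ^ (1 - γ) := by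
      rw [← Real.rpow_add_one hε0.ne' (-γ)]
      congr 1; ring
    have hlow : p ^ (-γ) * δ - ‖G‖ * M * ε ^ (1 - γ) ≤ ∫ s in (0:ℝ)..a, φ s := by
      have h1 : (∫ s in (0:ℝ)..a, φ s) = u a * w a - u 0 * w 0 - ∫ s in (0:ℝ)..a, u' s * w s :=
        hibp
      rw [h1, show p ^ (-γ) = u 0 from hu0.symm]
      have h2 : (∫ s in (0:ℝ)..a, u' s * w s) ≤ (u a - u 0) * w p := by
        rw [← hrhs]; exact hmono
      have huapos : 0 ≤ u a := by rw [hua]; exact Real.rpow_nonneg hε0.le _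
      have h3 : -(‖G‖ * M * ε ^ (1 - γ)) ≤ u a * (w a - w p) := by
        have h4 : -(u a * |w a - w p|) ≤ u a * (w a - w p) := by
          have h4' := mul_le_mul_of_nonneg_left (neg_abs_le (w a - w p)) huapos
          rwa [mul_neg] at h4'
        have h5 : u a * |w a - w p| ≤ ‖G‖ * M * ε ^ (1 - γ) := by
          rw [hua, ← hεγ]
          have huapos' : (0:ℝ) ≤ ε ^ (-γ) := Real.rpow_nonneg hε0.le _
          calc ε ^ (-γ) * |w a - w p| ≤ ε ^ (-γ) * (‖G‖ * (M * ε)) :=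
                mul_le_mul_of_nonneg_left hwap huapos'
            _ = ‖G‖ * M * (ε ^ (-γ) * ε) := by ring
        linarith only [h4, h5]
      have h6 : u 0 * δ ≤ u 0 * (w p - w 0) := by
        have hu0pos : 0 ≤ u 0 := by rw [hu0]; exact Real.rpow_nonneg hp0.le _
        exact mul_le_mul_of_nonneg_left (by linarith only [hw0]) hu0pos
      have h7 : u a * w a - u 0 * w 0 - (u a - u 0) * w p
          = u a * (w a - w p) + u 0 * (w p - w 0) := by ring
      linarith only [h2, h3, h6, h7]
    -- tail bound
    have htailker : IntervalIntegrable (fun s => ‖G‖ * M * (p - s) ^ (-γ)) volume a p := by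
      apply IntervalIntegrable.mono_set' ((hker.const_mul (‖G‖ * M)))
      rw [uIoc_of_le hap.le, uIoc_of_le hp0.le]
      exact Ioc_subset_Ioc ha0 le_rfl
    have htailval : (∫ s in a..p, (p - s) ^ (-γ)) = ε ^ (1 - γ) / (1 - γ) := by
      have h1 := intervalIntegral.integral_comp_sub_left (a := a) (b := p)
        (fun x : ℝ => x ^ (-γ)) p
      rw [sub_self] at h1
      have h2 : p - a = ε := by rw [ha]; ring
      rw [h2] at h1
      rw [h1, integral_rpow (Or.inl (by linarith))]
      rw [Real.zero_rpow (by linarith : -γ + 1 ≠ 0)]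
      rw [show -γ + 1 = 1 - γ by ring]
      ring
    have htail : |∫ s in a..p, φ s| ≤ ‖G‖ * M * (ε ^ (1 - γ) / (1 - γ)) := by
      have h1 : ∀ᵐ s ∂volume.restrict (uIoc a p), ‖φ s‖ ≤ ‖G‖ * M * (p - s) ^ (-γ) := by
        rw [ae_restrict_iff' measurableSet_uIoc]
        refine Filter.Eventually.of_forall fun s hs => ?_
        rw [uIoc_of_le hap.le] at hs
        have hsmem : s ∈ Icc 0 p := ⟨ha0.trans hs.1.le, hs.2⟩
        have hk0 : (0:ℝ) ≤ (p - s) ^ (-γ) := Real.rpow_nonneg (by linarith [hsmem.2]) _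
        have h2 : |w' s| ≤ ‖G‖ * M := by
          calc |w' s| ≤ ‖G‖ * ‖v' s‖ := abs_real_inner_le_norm _ _
            _ ≤ ‖G‖ * M := mul_le_mul_of_nonneg_left (hMbound s hsmem) (norm_nonneg _)
        calc ‖φ s‖ = (p - s) ^ (-γ) * |w' s| := by
              rw [hφdef, Real.norm_eq_abs, abs_mul, abs_of_nonneg hk0]
          _ ≤ (p - s) ^ (-γ) * (‖G‖ * M) := mul_le_mul_of_nonneg_left h2 hk0
          _ = ‖G‖ * M * (p - s) ^ (-γ) := by ring
      have h3 := intervalIntegral.norm_integral_le_of_norm_le hap.le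
        (by rw [← ae_restrict_iff' measurableSet_Ioc, ← uIoc_of_le hap.le]; exact h1) htailker
      rw [intervalIntegral.integral_const_mul, htailval] at h3
      rw [← Real.norm_eq_abs]
      refine h3.trans ?_
      exact le_rfl
    -- splitting
    have hint1 : IntervalIntegrable φ volume 0 a := by
      apply hφint.mono_set'
      rw [uIoc_of_le ha0, uIoc_of_le hp0.le]
      exact Ioc_subset_Ioc le_rfl hap.le
    have hint2 : IntervalIntegrable φ volume a p := by
      apply hφint.mono_set'
      rw [uIoc_of_le hap.le, uIoc_of_le hp0.le]
      exact Ioc_subset_Ioc ha0 le_rfl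
    have hsplit : I = (∫ s in (0:ℝ)..a, φ s) + ∫ s in a..p, φ s := by
      rw [hIdef, ← intervalIntegral.integral_add_adjacent_intervals hint1 hint2]
    have htail' : -(‖G‖ * M * (ε ^ (1 - γ) / (1 - γ))) ≤ ∫ s in a..p, φ s := by
      have := neg_abs_le (∫ s in a..p, φ s)
      linarith
    have hfinal : p ^ (-γ) * δ - ‖G‖ * M * ε ^ (1 - γ)
        - ‖G‖ * M * (ε ^ (1 - γ) / (1 - γ)) ≤ I := by
      rw [hsplit]
      calc p ^ (-γ) * δ - ‖G‖ * M * ε ^ (1 - γ) - ‖G‖ * M * (ε ^ (1 - γ) / (1 - γ))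
          = (p ^ (-γ) * δ - ‖G‖ * M * ε ^ (1 - γ))
            + -(‖G‖ * M * (ε ^ (1 - γ) / (1 - γ))) := by ring
        _ ≤ (∫ s in (0:ℝ)..a, φ s) + ∫ s in a..p, φ s := add_le_add hlow htail'
    have : p ^ (-γ) * δ ≤ ‖G‖ * M * ε ^ (1 - γ) + ‖G‖ * M * (ε ^ (1 - γ) / (1 - γ)) := by
      linarith [hIle]
    calc p ^ (-γ) * δ ≤ ‖G‖ * M * ε ^ (1 - γ) + ‖G‖ * M * (ε ^ (1 - γ) / (1 - γ)) := this
      _ = (‖G‖ * M + ‖G‖ * M / (1 - γ)) * ε ^ (1 - γ) := by ring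
  -- conclude by letting ε → 0
  set K : ℝ := ‖G‖ * M + ‖G‖ * M / (1 - γ) with hK
  have hLpos : 0 < p ^ (-γ) * δ :=
    mul_pos (Real.rpow_pos_of_pos hp0 _) hδ
  have hten : Filter.Tendsto (fun ε : ℝ => K * ε ^ (1 - γ)) (𝓝[>] 0) (𝓝 0) := by
    have h1 : ContinuousAt (fun ε : ℝ => K * ε ^ (1 - γ)) 0 :=
      continuousAt_const.mul (Real.continuousAt_rpow_const 0 _ (Or.inr (by linarith)))
    have h2 := h1.tendsto
    rw [show K * (0:ℝ) ^ (1 - γ) = 0 by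
      rw [Real.zero_rpow (by linarith : (1:ℝ) - γ ≠ 0)]; ring] at h2
    exact h2.mono_left nhdsWithin_le_nhds
  have hev : ∀ᶠ ε in 𝓝[>] (0:ℝ), K * ε ^ (1 - γ) < p ^ (-γ) * δ :=
    hten.eventually_lt_const hLpos
  have hev2 : ∀ᶠ ε in 𝓝[>] (0:ℝ), ε ∈ Ioo 0 p :=
    Ioo_mem_nhdsGT_of_mem ⟨le_rfl, hp0⟩
  obtain ⟨ε, h1, h2⟩ := (hev.and hev2).exists
  have := hkey ε h2.1 h2.2
  linarith only [this, h1]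
end

section
/- (Energy inequality for fractional Hamiltonian systems.) Let 0 < γ < 1, T ∈ (0, ∞], let E : ℝ^m → ℝ be convex and continuously differentiable, let J be an m × m real antisymmetric matrix (Jᵀ = −J), and let v : [0, T) → ℝ^m be continuously differentiable and satisfy, for all t ∈ (0, T), (1/Γ(1−γ)) ∫_0^t (t−s)^{−γ} v′(s) ds = J ∇E(v(t)). Then E(v(t)) ≤ E(v(0)) for all t ∈ [0, T); i.e. the fractional Hamiltonian system does not increase the energy. -/
open MeasureTheory Set
open scoped ENNReal

section Aux
open intervalIntegral in
lemma frac_ibp_bound (γ : ℝ) (hγ0 : 0 < γ) (hγ1 : γ < 1) (t : ℝ) (ht : 0 < t)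
    (f f' : ℝ → ℝ)
    (hf : ∀ s ∈ Icc (0:ℝ) t, HasDerivAt f (f' s) s)
    (hf'c : ContinuousOn f' (Icc 0 t))
    (hneg : ∀ s ∈ Icc (0:ℝ) t, f s ≤ 0)
    (hft : f t = 0) :
    t ^ (-γ) * (-f 0) ≤ ∫ s in (0:ℝ)..t, (t - s) ^ (-γ) * f' s := by
  -- integrability of the weight
  have hw : IntervalIntegrable (fun s => (t - s) ^ (-γ)) volume 0 t := by
    have h0 : IntervalIntegrable (fun x : ℝ => x ^ (-γ)) volume 0 t :=
      intervalIntegrable_rpow' (by linarith)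
    simpa using (h0.comp_sub_left t).symm
  have hG : IntervalIntegrable (fun s => (t - s) ^ (-γ) * f' s) volume 0 t :=
    hw.mul_continuousOn (by rwa [uIcc_of_le ht.le])
  -- bound on f'
  obtain ⟨C, hC⟩ := isCompact_Icc.exists_bound_of_continuousOn hf'c
  have hC0 : 0 ≤ C := le_trans (norm_nonneg _) (hC 0 ⟨le_refl 0, ht.le⟩)
  -- key inequality for each ε ∈ (0,t)
  have key : ∀ ε ∈ Ioo (0:ℝ) t,
      ε ^ (-γ) * f (t - ε) - t ^ (-γ) * f 0 ≤
        ∫ s in (0:ℝ)..(t - ε), (t - s) ^ (-γ) * f' s := by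
    intro ε hε
    have hsub : Icc (0:ℝ) (t - ε) ⊆ Icc 0 t :=
      Icc_subset_Icc le_rfl (by linarith [hε.1])
    have huIcc : uIcc (0:ℝ) (t - ε) = Icc 0 (t-ε) := uIcc_of_le (by linarith [hε.2])
    have hupos : ∀ x ∈ Icc (0:ℝ) (t - ε), 0 < t - x := by
      intro x hx; have := hx.2; linarith [hε.1]
    have hu : ∀ x ∈ uIcc (0:ℝ) (t - ε),
        HasDerivAt (fun s => (t - s) ^ (-γ)) (γ * (t - x) ^ (-γ - 1)) x := by
      intro x hx
      rw [huIcc] at hx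
      have h1 : HasDerivAt (fun s : ℝ => t - s) (-1) x := by
        simpa using (hasDerivAt_id x).const_sub t
      have h2 : HasDerivAt (fun y : ℝ => y ^ (-γ)) (-γ * (t - x) ^ (-γ - 1)) (t - x) :=
        Real.hasDerivAt_rpow_const (Or.inl (ne_of_gt (hupos x hx)))
      have := h2.comp x h1
      exact this.congr_deriv (by ring)
    have hv : ∀ x ∈ uIcc (0:ℝ) (t - ε), HasDerivAt f (f' x) x := by
      intro x hx; rw [huIcc] at hx; exact hf x (hsub hx)
    have hu'int : IntervalIntegrable (fun x => γ * (t - x) ^ (-γ - 1)) volume 0 (t - ε) := by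
      apply ContinuousOn.intervalIntegrable
      rw [huIcc]
      apply ContinuousOn.mul continuousOn_const
      apply ContinuousOn.rpow_const (continuousOn_const.sub continuousOn_id)
      intro x hx; exact Or.inl (ne_of_gt (hupos x hx))
    have hv'int : IntervalIntegrable f' volume 0 (t - ε) := by
      apply ContinuousOn.intervalIntegrable
      rw [huIcc]; exact hf'c.mono hsub
    have hibp := integral_mul_deriv_eq_deriv_mul hu hv hu'int hv'int
    rw [hibp]
    have hlast : (0:ℝ) ≤ - ∫ x in (0:ℝ)..(t - ε), (γ * (t - x) ^ (-γ - 1)) * f x := by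
      rw [← intervalIntegral.integral_neg]
      apply intervalIntegral.integral_nonneg (by linarith [hε.2])
      intro x hx
      rw [neg_nonneg]
      apply mul_nonpos_of_nonneg_of_nonpos
      · exact mul_nonneg hγ0.le (Real.rpow_nonneg (by linarith [hx.2, hε.1]) _)
      · exact hneg x (hsub hx)
    have heq1 : t - (t - ε) = ε := by ring
    have heq2 : t - (0:ℝ) = t := by ring
    rw [heq1, heq2]
    linarith [hlast]
  -- limit as ε → 0⁺
  have hprim : ContinuousOn (fun b => ∫ s in (0:ℝ)..b, (t - s) ^ (-γ) * f' s) (uIcc 0 t) :=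
    continuousOn_primitive_interval' hG left_mem_uIcc
  have hcw := (hprim t right_mem_uIcc).tendsto
  have htend1 : Filter.Tendsto (fun ε : ℝ => t - ε) (nhdsWithin 0 (Ioi 0))
      (nhdsWithin t (uIcc 0 t)) := by
    apply tendsto_nhdsWithin_of_tendsto_nhds_of_eventually_within
    · have : Filter.Tendsto (fun ε : ℝ => t - ε) (nhds 0) (nhds (t - 0)) :=
        (continuous_const.sub continuous_id).tendsto 0
      rw [sub_zero] at this
      exact this.mono_left nhdsWithin_le_nhds
    · filter_upwards [Ioo_mem_nhdsGT_of_mem (Set.left_mem_Ico.mpr ht)] with ε hε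
      rw [uIcc_of_le ht.le]
      exact ⟨by linarith [hε.2], by linarith [hε.1]⟩
  have hLHS : Filter.Tendsto (fun ε : ℝ => ∫ s in (0:ℝ)..(t - ε), (t - s) ^ (-γ) * f' s)
      (nhdsWithin 0 (Ioi 0)) (nhds (∫ s in (0:ℝ)..t, (t - s) ^ (-γ) * f' s)) :=
    hcw.comp htend1
  -- boundary term tends to 0
  have hbnd : ∀ ε ∈ Ioo (0:ℝ) t, |ε ^ (-γ) * f (t - ε)| ≤ C * ε ^ (1 - γ) := by
    intro ε hε
    have hseg : ∀ x ∈ Icc (t - ε) t, HasDerivWithinAt f (f' x) (Icc (t - ε) t) x := by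
      intro x hx
      exact (hf x ⟨by linarith [hx.1, hε.2], hx.2⟩).hasDerivWithinAt
    have hCseg : ∀ x ∈ Ico (t - ε) t, ‖f' x‖ ≤ C := by
      intro x hx
      exact hC x ⟨by linarith [hx.1, hε.2], hx.2.le⟩
    have := norm_image_sub_le_of_norm_deriv_le_segment' hseg hCseg t
      ⟨by linarith [hε.1], le_refl t⟩
    rw [hft] at this
    have hfb : |f (t - ε)| ≤ C * ε := by
      have : ‖(0:ℝ) - f (t - ε)‖ ≤ C * (t - (t - ε)) := this
      rw [zero_sub, norm_neg] at this
      simpa using this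
    have hεpos := hε.1
    calc |ε ^ (-γ) * f (t - ε)| = ε ^ (-γ) * |f (t - ε)| := by
          rw [abs_mul, abs_of_nonneg (Real.rpow_nonneg hεpos.le _)]
      _ ≤ ε ^ (-γ) * (C * ε) := by
          apply mul_le_mul_of_nonneg_left hfb (Real.rpow_nonneg hεpos.le _)
      _ = C * (ε ^ (-γ) * ε ^ (1:ℝ)) := by rw [Real.rpow_one]; ring
      _ = C * ε ^ (1 - γ) := by
          rw [← Real.rpow_add hεpos]; ring_nf
  have hpow0 : Filter.Tendsto (fun ε : ℝ => C * ε ^ (1 - γ)) (nhdsWithin 0 (Ioi 0))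
      (nhds 0) := by
    have h1 : Filter.Tendsto (fun ε : ℝ => ε ^ (1 - γ)) (nhds 0) (nhds ((0:ℝ) ^ (1 - γ))) :=
      (Real.continuousAt_rpow_const 0 (1 - γ) (Or.inr (by linarith))).tendsto
    rw [Real.zero_rpow (by linarith)] at h1
    have h2 := (h1.const_mul C).mono_left (nhdsWithin_le_nhds (s := Ioi (0:ℝ)))
    simpa using h2
  have hRHS0 : Filter.Tendsto (fun ε : ℝ => ε ^ (-γ) * f (t - ε)) (nhdsWithin 0 (Ioi 0))
      (nhds 0) := by
    apply squeeze_zero_norm' _ hpow0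
    filter_upwards [Ioo_mem_nhdsGT_of_mem (Set.left_mem_Ico.mpr ht)] with ε hε
    exact hbnd ε hε
  have hRHS : Filter.Tendsto (fun ε : ℝ => ε ^ (-γ) * f (t - ε) - t ^ (-γ) * f 0)
      (nhdsWithin 0 (Ioi 0)) (nhds (t ^ (-γ) * (-f 0))) := by
    have := hRHS0.sub (tendsto_const_nhds (x := t ^ (-γ) * f 0))
    simpa [mul_neg] using this
  apply le_of_tendsto_of_tendsto hRHS hLHS
  filter_upwards [Ioo_mem_nhdsGT_of_mem (Set.left_mem_Ico.mpr ht)] with ε hε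
  exact key ε hε
lemma grad_convex_ineq {F : Type*} [NormedAddCommGroup F] [InnerProductSpace ℝ F]
    [CompleteSpace F] {E : F → ℝ}
    (hconv : ConvexOn ℝ Set.univ E)
    {x gx : F} (hg : HasGradientAt E gx x) (y : F) :
    (inner ℝ gx (y - x) : ℝ) ≤ E y - E x := by
  set c : ℝ → F := fun θ => x + θ • (y - x) with hc
  have hφconv : ConvexOn ℝ Set.univ (E ∘ c) := by
    have haff : ConvexOn ℝ ((AffineMap.lineMap x y : ℝ →ᵃ[ℝ] F) ⁻¹' Set.univ)
        (E ∘ (AffineMap.lineMap x y : ℝ →ᵃ[ℝ] F)) := hconv.comp_affineMap _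
    have : (E ∘ (AffineMap.lineMap x y : ℝ →ᵃ[ℝ] F)) = E ∘ c := by
      funext θ
      simp [hc, AffineMap.lineMap_apply, add_comm]
    rw [this, Set.preimage_univ] at haff
    exact haff
  have hcd : HasDerivAt c (y - x) 0 := by
    have : HasDerivAt (fun θ : ℝ => θ • (y - x)) ((1:ℝ) • (y - x)) 0 :=
      (hasDerivAt_id 0).smul_const (y - x)
    simpa [hc, one_smul] using this.const_add x
  have hc0 : c 0 = x := by simp [hc]
  have hφd : HasDerivAt (E ∘ c) (inner ℝ gx (y - x) : ℝ) 0 := by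
    have hE : HasFDerivAt E (InnerProductSpace.toDual ℝ F gx : F →L[ℝ] ℝ) x :=
      hg.hasFDerivAt
    rw [← hc0] at hE
    have := hE.comp_hasDerivAt 0 hcd
    simpa [InnerProductSpace.toDual_apply_apply] using this
  have hslope := hφconv.le_slope_of_hasDerivAt (Set.mem_univ 0) (Set.mem_univ 1)
    one_pos hφd
  have : slope (E ∘ c) 0 1 = E y - E x := by
    rw [slope_def_field]
    simp [hc, Function.comp]
  rw [this] at hslope
  exact hslope
end Aux

/-- Energy inequality for fractional Hamiltonian systems: for `0 < γ < 1`, `T ∈ (0,∞]`,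
`E : ℝ^m → ℝ` convex and continuously differentiable (with gradient `g`), `J` an
`m × m` real antisymmetric matrix (`Jᵀ = −J`), and `v : [0,T) → ℝ^m` continuously
differentiable satisfying `(1/Γ(1−γ)) ∫_0^t (t−s)^{−γ} v'(s) ds = J ∇E(v(t))` for all
`t ∈ (0,T)`, one has `E(v(t)) ≤ E(v(0))` for all `t ∈ [0,T)`. -/
theorem fractional_hamiltonian_energy_inequality
    (γ : ℝ) (hγ0 : 0 < γ) (hγ1 : γ < 1) (T : ℝ≥0∞) (hT : 0 < T) (m : ℕ)
    (E : EuclideanSpace ℝ (Fin m) → ℝ)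
    (g : EuclideanSpace ℝ (Fin m) → EuclideanSpace ℝ (Fin m))
    (hconv : ConvexOn ℝ Set.univ E)
    (hgrad : ∀ x : EuclideanSpace ℝ (Fin m), HasGradientAt E (g x) x)
    (hgcont : Continuous g)
    (J : Matrix (Fin m) (Fin m) ℝ)
    (hJ : J.transpose = -J)
    (v v' : ℝ → EuclideanSpace ℝ (Fin m))
    (hderiv : ∀ t : ℝ, 0 ≤ t → ENNReal.ofReal t < T → HasDerivAt v (v' t) t)
    (hv'cont : ContinuousOn v' {t : ℝ | 0 ≤ t ∧ ENNReal.ofReal t < T})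
    (heq : ∀ t : ℝ, 0 < t → ENNReal.ofReal t < T →
      (1 / Real.Gamma (1 - γ)) • (∫ s in (0:ℝ)..t, (t - s) ^ (-γ) • v' s) =
        (EuclideanSpace.equiv (Fin m) ℝ).symm
          (J.mulVec ((EuclideanSpace.equiv (Fin m) ℝ) (g (v t))))) :
    ∀ t : ℝ, 0 ≤ t → ENNReal.ofReal t < T → E (v t) ≤ E (v 0) := by
  intro t0 ht0 ht0T
  by_contra hcon
  push_neg at hcon
  -- basic continuity facts
  have hEcont : Continuous E :=
    continuous_iff_continuousAt.mpr fun x => (hgrad x).hasFDerivAt.differentiableAt.continuousAt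
  have hscope : ∀ s : ℝ, 0 ≤ s → s ≤ t0 → ENNReal.ofReal s < T := fun s h1 h2 =>
    lt_of_le_of_lt (ENNReal.ofReal_le_ofReal h2) ht0T
  have hvcont : ContinuousOn v (Icc 0 t0) := fun s hs =>
    ((hderiv s hs.1 (hscope s hs.1 hs.2)).continuousAt).continuousWithinAt
  have hwcont : ContinuousOn (fun s => E (v s)) (Icc 0 t0) := hEcont.comp_continuousOn hvcont
  obtain ⟨t₁, ht₁mem, hmax⟩ :=
    isCompact_Icc.exists_isMaxOn (nonempty_Icc.mpr ht0) hwcont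
  have hmax' : ∀ s ∈ Icc (0:ℝ) t0, E (v s) ≤ E (v t₁) := hmax
  have ht0max : E (v t0) ≤ E (v t₁) := hmax' t0 ⟨ht0, le_refl t0⟩
  have ht₁pos : 0 < t₁ := by
    rcases eq_or_lt_of_le ht₁mem.1 with h | h
    · exfalso
      rw [← h] at ht0max
      linarith
    · exact h
  have ht₁T : ENNReal.ofReal t₁ < T := hscope t₁ ht₁mem.1 ht₁mem.2
  set c : EuclideanSpace ℝ (Fin m) := g (v t₁) with hcdef
  set f : ℝ → ℝ := fun s => (inner ℝ c (v s - v t₁) : ℝ) with hfdef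
  set f' : ℝ → ℝ := fun s => (inner ℝ c (v' s) : ℝ) with hf'def
  have hsub1 : Icc (0:ℝ) t₁ ⊆ Icc 0 t0 := Icc_subset_Icc le_rfl ht₁mem.2
  have hsub2 : Icc (0:ℝ) t₁ ⊆ {t : ℝ | 0 ≤ t ∧ ENNReal.ofReal t < T} := fun s hs =>
    ⟨hs.1, hscope s hs.1 (le_trans hs.2 ht₁mem.2)⟩
  -- derivative of f
  have hfderiv : ∀ s ∈ Icc (0:ℝ) t₁, HasDerivAt f (f' s) s := by
    intro s hs
    have hvd : HasDerivAt (fun u => v u - v t₁) (v' s) s :=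
      (hderiv s hs.1 (hsub2 hs).2).sub_const (v t₁)
    have := (hasDerivAt_const s c).inner ℝ hvd
    simpa [hfdef, hf'def] using this
  have hf'cont : ContinuousOn f' (Icc 0 t₁) :=
    (innerSL ℝ c).continuous.comp_continuousOn (hv'cont.mono hsub2)
  -- f is nonpositive
  have hfneg : ∀ s ∈ Icc (0:ℝ) t₁, f s ≤ 0 := by
    intro s hs
    have h1 : (inner ℝ c (v s - v t₁) : ℝ) ≤ E (v s) - E (v t₁) :=
      grad_convex_ineq hconv (hgrad (v t₁)) (v s)
    have h2 : E (v s) ≤ E (v t₁) := hmax' s (hsub1 hs)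
    simp only [hfdef]
    linarith
  have hft : f t₁ = 0 := by simp [hfdef]
  have hf0 : f 0 < 0 := by
    have h1 : (inner ℝ c (v 0 - v t₁) : ℝ) ≤ E (v 0) - E (v t₁) :=
      grad_convex_ineq hconv (hgrad (v t₁)) (v 0)
    simp only [hfdef]
    linarith
  -- main bound
  have hbound := frac_ibp_bound γ hγ0 hγ1 t₁ ht₁pos f f' hfderiv hf'cont hfneg hft
  -- the integral vanishes
  have hw1 : IntervalIntegrable (fun s => (t₁ - s) ^ (-γ)) volume 0 t₁ := by
    have h0 : IntervalIntegrable (fun x : ℝ => x ^ (-γ)) volume 0 t₁ :=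
      intervalIntegral.intervalIntegrable_rpow' (by linarith)
    simpa using (h0.comp_sub_left t₁).symm
  have hwIcc : IntegrableOn (fun s => (t₁ - s) ^ (-γ)) (Icc 0 t₁) volume := by
    rw [integrableOn_Icc_iff_integrableOn_Ioc]
    exact (intervalIntegrable_iff_integrableOn_Ioc_of_le ht₁pos.le).1 hw1
  have hVint : IntervalIntegrable (fun s => (t₁ - s) ^ (-γ) • v' s) volume 0 t₁ := by
    apply MeasureTheory.IntegrableOn.intervalIntegrable
    rw [uIcc_of_le ht₁pos.le]
    exact hwIcc.smul_continuousOn (hv'cont.mono hsub2) isCompact_Icc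
  have hcomm := (innerSL ℝ c).intervalIntegral_comp_comm hVint
  have hG0 : Real.Gamma (1 - γ) > 0 := Real.Gamma_pos_of_pos (by linarith)
  have hVeq : (∫ s in (0:ℝ)..t₁, (t₁ - s) ^ (-γ) • v' s) =
      Real.Gamma (1 - γ) •
        ((EuclideanSpace.equiv (Fin m) ℝ).symm
          (J.mulVec ((EuclideanSpace.equiv (Fin m) ℝ) c))) := by
    have h := heq t₁ ht₁pos ht₁T
    rw [← h, smul_smul]
    rw [mul_one_div, div_self (ne_of_gt hG0), one_smul]
  have hanti : (inner ℝ c ((EuclideanSpace.equiv (Fin m) ℝ).symm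
      (J.mulVec ((EuclideanSpace.equiv (Fin m) ℝ) c))) : ℝ) = 0 := by
    have h1 : (inner ℝ c ((EuclideanSpace.equiv (Fin m) ℝ).symm
        (J.mulVec ((EuclideanSpace.equiv (Fin m) ℝ) c))) : ℝ)
        = dotProduct ((EuclideanSpace.equiv (Fin m) ℝ) c)
            (J.mulVec ((EuclideanSpace.equiv (Fin m) ℝ) c)) := by
      simp [PiLp.inner_apply, RCLike.inner_apply, dotProduct, mul_comm]
    have h2 : ∀ x : Fin m → ℝ, dotProduct x (J.mulVec x) = 0 := by
      intro x
      have h3 : dotProduct x (J.mulVec x) = - dotProduct x (J.mulVec x) := by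
        conv_lhs => rw [Matrix.dotProduct_mulVec, ← Matrix.mulVec_transpose, hJ,
          Matrix.neg_mulVec, neg_dotProduct, dotProduct_comm]
      linarith
    rw [h1, h2]
  have hint0 : (∫ s in (0:ℝ)..t₁, (t₁ - s) ^ (-γ) * f' s) = 0 := by
    have hstep : (fun s => (t₁ - s) ^ (-γ) * f' s)
        = fun s => (innerSL ℝ c) ((t₁ - s) ^ (-γ) • v' s) := by
      funext s
      simp [hf'def, inner_smul_right, mul_comm]
    rw [hstep, hcomm, hVeq, (innerSL ℝ c).map_smul]
    simp only [innerSL_apply_apply, smul_eq_mul]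
    rw [hanti, mul_zero]
  rw [hint0] at hbound
  have hpow : 0 < t₁ ^ (-γ) := Real.rpow_pos_of_pos ht₁pos _
  nlinarith
end
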